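/- The function h₁(x) = (sin(x)/x - cos²(x)) / sin²(x) is strictly decreasing on (0, π). -/

import Mathlib

open Real

lemma sin_lb (x : ℝ) (hx : 0 ≤ x) : x - x ^ 3 / 6 ≤ Real.sin x := by
  have hmono : Monotone (fun x : ℝ => Real.sin x - x + x ^ 3 / 6) := by
    apply monotone_of_hasDerivAt_nonneg (f' := fun x => Real.cos x - 1 + 3 * x ^ 2 / 6)
    · intro x
      exact ((Real.hasDerivAt_sin x).sub (hasDerivAt_id x)).add
        ((hasDerivAt_pow 3 x).div_const 6)
    · intro x
      have := Real.one_sub_sq_div_two_le_cos (x := x)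
      simp only [Pi.zero_apply]
      nlinarith
  have h0 := hmono hx
  simp at h0
  nlinarith [h0]

lemma cos_ub (x : ℝ) (hx : 0 ≤ x) : Real.cos x ≤ 1 - x ^ 2 / 2 + x ^ 4 / 24 := by
  have key : ∀ y : ℝ, HasDerivAt (fun x : ℝ => 1 - x ^ 2 / 2 + x ^ 4 / 24 - Real.cos x)
      (-(2 * y) / 2 + 4 * y ^ 3 / 24 - (-Real.sin y)) y := by
    intro y
    exact ((((hasDerivAt_const y (1:ℝ)).sub ((hasDerivAt_pow 2 y).div_const 2)).add
      ((hasDerivAt_pow 4 y).div_const 24)).sub (Real.hasDerivAt_cos y)).congr_deriv (by ring)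
  have hmono : MonotoneOn (fun x : ℝ => 1 - x ^ 2 / 2 + x ^ 4 / 24 - Real.cos x) (Set.Ici 0) := by
    apply monotoneOn_of_deriv_nonneg (convex_Ici 0)
    · exact fun y _ => ((key y).continuousAt).continuousWithinAt
    · exact fun y _ => ((key y).differentiableAt).differentiableWithinAt
    · intro y hy
      rw [interior_Ici] at hy
      rw [(key y).deriv]
      have := sin_lb y hy.le
      nlinarith
  have h0 := hmono (Set.self_mem_Ici) hx hx
  simp at h0
  nlinarith [h0]

lemma A_pos (x : ℝ) (hx : 0 < x) (hxπ : x < Real.pi) :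
    0 < Real.sin x ^ 2 + x * Real.cos x * (Real.sin x - 2 * x) := by
  have hs : 0 < Real.sin x := Real.sin_pos_of_pos_of_lt_pi hx hxπ
  have hsu : Real.sin x < x := Real.sin_lt hx
  rcases le_or_gt (Real.cos x) 0 with hc | hc
  · have hnn : 0 ≤ x * (-Real.cos x) * (2 * x - Real.sin x) :=
      mul_nonneg (mul_nonneg hx.le (by linarith)) (by linarith)
    nlinarith [pow_pos hs 2]
  · -- cos x > 0, so x < π/2 < 1.58
    have hx2 : x < Real.pi / 2 := by
      by_contra h
      push_neg at h
      exact absurd (Real.cos_nonpos_of_pi_div_two_le_of_le h (by linarith [Real.pi_pos])) (by linarith)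
    have hpi : Real.pi < 3.15 := by linarith [Real.pi_lt_d2]
    have hx3 : x < 1.575 := by linarith
    have hlb := sin_lb x hx.le
    have hub := cos_ub x hx.le
    have h1 : 0 < x - x ^ 3 / 6 := by nlinarith
    have h2 : (x - x ^ 3 / 6) ^ 2 ≤ Real.sin x ^ 2 := by nlinarith
    have h3 : x * Real.cos x * (2 * x - Real.sin x)
        ≤ x * (1 - x ^ 2 / 2 + x ^ 4 / 24) * (x + x ^ 3 / 6) := by
      have e1 : 2 * x - Real.sin x ≤ x + x ^ 3 / 6 := by linarith
      have e2 : 0 ≤ 2 * x - Real.sin x := by linarith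
      have e3 : 0 < 1 - x ^ 2 / 2 + x ^ 4 / 24 := lt_of_lt_of_le hc hub
      nlinarith [mul_nonneg (sub_nonneg.2 hub) (mul_nonneg hx.le e2),
        mul_nonneg (mul_nonneg hx.le e3.le) (sub_nonneg.2 e1)]
    have h4 : x * (1 - x ^ 2 / 2 + x ^ 4 / 24) * (x + x ^ 3 / 6) < (x - x ^ 3 / 6) ^ 2 := by
      have h10 : x ^ 2 < 10 := by nlinarith
      nlinarith [mul_pos (pow_pos hx 4) (show (0:ℝ) < 10 - x ^ 2 by linarith)]
    nlinarith

lemma hasDerivAt_h (x : ℝ) (hx0 : x ≠ 0) (hsx : Real.sin x ≠ 0) :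
    HasDerivAt (fun x : ℝ => (Real.sin x / x - Real.cos x ^ 2) / Real.sin x ^ 2)
      ((((Real.cos x * x - Real.sin x * 1) / x ^ 2 -
          2 * Real.cos x ^ 1 * (-Real.sin x)) * Real.sin x ^ 2 -
        (Real.sin x / x - Real.cos x ^ 2) * (2 * Real.sin x ^ 1 * Real.cos x)) /
        (Real.sin x ^ 2) ^ 2) x := by
  have hnum : HasDerivAt (fun x : ℝ => Real.sin x / x - Real.cos x ^ 2)
      ((Real.cos x * x - Real.sin x * 1) / x ^ 2 - 2 * Real.cos x ^ 1 * (-Real.sin x)) x :=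
    ((Real.hasDerivAt_sin x).div (hasDerivAt_id x) hx0).sub ((Real.hasDerivAt_cos x).pow 2)
  have hden : HasDerivAt (fun x : ℝ => Real.sin x ^ 2) (2 * Real.sin x ^ 1 * Real.cos x) x :=
    (Real.hasDerivAt_sin x).pow 2
  exact hnum.div hden (pow_ne_zero 2 hsx)

theorem h1_strictAntiOn :
    StrictAntiOn (fun x : ℝ => (Real.sin x / x - Real.cos x ^ 2) / Real.sin x ^ 2)
      (Set.Ioo 0 Real.pi) := by
  apply strictAntiOn_of_deriv_neg (convex_Ioo 0 Real.pi)
  · intro x hx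
    have hx0 : x ≠ 0 := ne_of_gt hx.1
    have hsx : Real.sin x ≠ 0 := ne_of_gt (Real.sin_pos_of_pos_of_lt_pi hx.1 hx.2)
    exact (hasDerivAt_h x hx0 hsx).continuousAt.continuousWithinAt
  · intro x hx
    rw [interior_Ioo] at hx
    have hx0 : (0:ℝ) < x := hx.1
    have hsx : 0 < Real.sin x := Real.sin_pos_of_pos_of_lt_pi hx.1 hx.2
    rw [(hasDerivAt_h x (ne_of_gt hx0) (ne_of_gt hsx)).deriv]
    have hA := A_pos x hx.1 hx.2
    have key : (((Real.cos x * x - Real.sin x * 1) / x ^ 2 -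
          2 * Real.cos x ^ 1 * (-Real.sin x)) * Real.sin x ^ 2 -
        (Real.sin x / x - Real.cos x ^ 2) * (2 * Real.sin x ^ 1 * Real.cos x)) /
        (Real.sin x ^ 2) ^ 2
        = -((Real.sin x ^ 2 + x * Real.cos x * (Real.sin x - 2 * x)) /
            (x ^ 2 * Real.sin x ^ 3)) := by
      have hc2 : Real.sin x ^ 2 + Real.cos x ^ 2 = 1 := Real.sin_sq_add_cos_sq x
      field_simp
      linear_combination (2 * x ^ 2 * Real.cos x) * hc2
    rw [key]
    have : 0 < (Real.sin x ^ 2 + x * Real.cos x * (Real.sin x - 2 * x)) /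
        (x ^ 2 * Real.sin x ^ 3) :=
      div_pos hA (by positivity)
    linarith
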